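/- Let p(x₁,…,xₘ) = ∑_{σ∈Sₘ} c_σ x_{σ(1)}⋯x_{σ(m)} (c_σ ∈ ℝ) be a multilinear polynomial on the real quaternion algebra ℍ. If Im p contains a nonzero scalar quaternion and also contains a quaternion that is not scalar, then Im p = ℍ. -/

import Mathlib

open Quaternion

/-- Evaluation of the multilinear polynomial
`p(x₁,…,xₘ) = ∑_{σ ∈ Sₘ} c_σ x_{σ(1)} ⋯ x_{σ(m)}` on the real quaternions. -/
noncomputable def mlinEval {m : ℕ} (c : Equiv.Perm (Fin m) → ℝ)
    (x : Fin m → ℍ[ℝ]) : ℍ[ℝ] :=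
  ∑ σ : Equiv.Perm (Fin m), c σ • (List.ofFn fun i => x (σ i)).prod

namespace MLAux

/-- A quaternion is scalar iff its three imaginary components vanish. -/
def IsSc (q : ℍ[ℝ]) : Prop := q.imI = 0 ∧ q.imJ = 0 ∧ q.imK = 0

lemma isSc_coe (r : ℝ) : IsSc (r : ℍ[ℝ]) := ⟨rfl, rfl, rfl⟩

lemma isSc_iff (q : ℍ[ℝ]) : IsSc q ↔ ∃ r : ℝ, q = (r : ℍ[ℝ]) := by
  constructor
  · rintro ⟨h1, h2, h3⟩
    exact ⟨q.re, by ext <;> simp [h1, h2, h3]⟩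
  · rintro ⟨r, rfl⟩; exact isSc_coe r

lemma ofFn_update {m : ℕ} (g : Fin m → ℍ[ℝ]) (t : Fin m) (ζ : ℍ[ℝ]) :
    List.ofFn (Function.update g t ζ) = (List.ofFn g).set t ζ := by
  apply List.ext_getElem
  · simp
  · intro n h1 h2
    simp only [List.getElem_ofFn, List.getElem_set]
    rcases eq_or_ne (t : ℕ) n with h | h
    · have : (⟨n, by simpa using h1⟩ : Fin m) = t := by
        ext; simp [h]
      rw [this, Function.update_self]
      simp [h]
    · have : (⟨n, by simpa using h1⟩ : Fin m) ≠ t := by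
        simp [Fin.ext_iff, Ne.symm h]
      simp [h, Function.update_of_ne this]

lemma comp_update {m : ℕ} (x : Fin m → ℍ[ℝ]) (σ : Equiv.Perm (Fin m)) (i : Fin m) (ζ : ℍ[ℝ]) :
    (fun l => Function.update x i ζ (σ l)) = Function.update (fun l => x (σ l)) (σ⁻¹ i) ζ := by
  funext l
  rcases eq_or_ne l (σ⁻¹ i) with h | h
  · subst h; rw [show σ (σ⁻¹ i) = i from σ.apply_symm_apply i, Function.update_self, Function.update_self]
  · have h1 : σ l ≠ i := fun hc => h (by simp [← hc])
    rw [Function.update_of_ne h1, Function.update_of_ne h]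

lemma monomial_update {m : ℕ} (x : Fin m → ℍ[ℝ]) (σ : Equiv.Perm (Fin m)) (i : Fin m) (ζ : ℍ[ℝ]) :
    (List.ofFn fun l => Function.update x i ζ (σ l)).prod =
      ((List.ofFn fun l => x (σ l)).take (σ⁻¹ i)).prod * ζ *
        ((List.ofFn fun l => x (σ l)).drop ((σ⁻¹ i) + 1)).prod := by
  rw [comp_update, ofFn_update, List.prod_set]
  have : ((σ⁻¹ i : Fin m) : ℕ) < (List.ofFn fun l => x (σ l)).length := by simp
  simp [this]

lemma mlinEval_update_add {m : ℕ} (c : Equiv.Perm (Fin m) → ℝ) (x : Fin m → ℍ[ℝ])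
    (i : Fin m) (ζ ζ' : ℍ[ℝ]) :
    mlinEval c (Function.update x i (ζ + ζ')) =
      mlinEval c (Function.update x i ζ) + mlinEval c (Function.update x i ζ') := by
  unfold mlinEval
  rw [← Finset.sum_add_distrib]
  refine Finset.sum_congr rfl fun σ _ => ?_
  rw [monomial_update, monomial_update, monomial_update, mul_add, add_mul, smul_add]

lemma mlinEval_update_smul {m : ℕ} (c : Equiv.Perm (Fin m) → ℝ) (x : Fin m → ℍ[ℝ])
    (i : Fin m) (a : ℝ) (ζ : ℍ[ℝ]) :
    mlinEval c (Function.update x i (a • ζ)) = a • mlinEval c (Function.update x i ζ) := by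
  unfold mlinEval
  rw [Finset.smul_sum]
  refine Finset.sum_congr rfl fun σ _ => ?_
  rw [monomial_update, monomial_update, mul_smul_comm, smul_mul_assoc, smul_comm]

lemma prod_map_conj (u : ℍ[ℝ]) (hu : u ≠ 0) (L : List ℍ[ℝ]) :
    (L.map fun z => u * z * u⁻¹).prod = u * L.prod * u⁻¹ := by
  induction L with
  | nil => simp [mul_inv_cancel₀ hu]
  | cons a L ih =>
      simp only [List.map_cons, List.prod_cons, ih]
      have h1 : u * a * u⁻¹ * (u * L.prod * u⁻¹) = u * a * (u⁻¹ * u) * L.prod * u⁻¹ := by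
        noncomm_ring
      rw [h1, inv_mul_cancel₀ hu, mul_one, mul_assoc u a]

lemma mlinEval_conj {m : ℕ} (c : Equiv.Perm (Fin m) → ℝ) (x : Fin m → ℍ[ℝ])
    (u : ℍ[ℝ]) (hu : u ≠ 0) :
    mlinEval c (fun l => u * x l * u⁻¹) = u * mlinEval c x * u⁻¹ := by
  unfold mlinEval
  rw [Finset.mul_sum, Finset.sum_mul]
  refine Finset.sum_congr rfl fun σ _ => ?_
  rw [mul_smul_comm, smul_mul_assoc]
  congr 1
  rw [← prod_map_conj u hu]
  congr 1
  rw [List.map_ofFn]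
  rfl

/-- An additive map vanishing wherever another additive map is nonzero vanishes
everywhere, provided the latter is somewhere nonzero. -/
lemma L0 {E : Type*} [AddCommGroup E] (M : ℍ[ℝ] → ℍ[ℝ]) (φ : ℍ[ℝ] → E)
    (hM : ∀ a b, M (a + b) = M a + M b) (hφ : ∀ a b, φ (a + b) = φ a + φ b)
    (ζ₀ : ℍ[ℝ]) (h0 : M ζ₀ ≠ 0) (hv : ∀ ζ, M ζ ≠ 0 → φ ζ = 0) : ∀ ζ, φ ζ = 0 := by
  intro ζ
  by_cases h : M ζ ≠ 0
  · exact hv ζ h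
  · push_neg at h
    have hsum : M (ζ + ζ₀) ≠ 0 := by rw [hM, h, zero_add]; exact h0
    have h1 : φ (ζ + ζ₀) = 0 := hv _ hsum
    have h2 : φ ζ₀ = 0 := hv _ h0
    have := hφ ζ ζ₀
    rw [h1, h2, add_zero] at this
    exact this.symm

/-- Key induction: scalarity of values propagates over freed slots. -/
lemma LEM {m : ℕ} (c : Equiv.Perm (Fin m) → ℝ) (y : Fin m → ℍ[ℝ]) :
    ∀ T J : Finset (Fin m), Disjoint T J →
      (∀ x : Fin m → ℍ[ℝ], (∀ l ∉ T, x l = y l) → IsSc (mlinEval c x)) →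
      (∀ x : Fin m → ℍ[ℝ], (∀ l ∉ T, x l = y l) → mlinEval c x ≠ 0 →
        ∀ x' : Fin m → ℍ[ℝ], (∀ l ∉ J, x' l = x l) → IsSc (mlinEval c x')) →
      mlinEval c y ≠ 0 →
      ∀ x : Fin m → ℍ[ℝ], (∀ l ∉ T ∪ J, x l = y l) → IsSc (mlinEval c x) := by
  intro T
  induction T using Finset.induction_on with
  | empty =>
      intro J _ H0 H1 H2 x hx
      exact H1 y (fun l _ => rfl) H2 x (fun l hl => hx l (by simpa using hl))
  | @insert t T' ht IH =>
      intro J hdisj H0 H1 H2 x hx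
      have hdisj' : Disjoint T' (insert t J) := by
        rw [Finset.disjoint_insert_right]
        exact ⟨ht, Finset.disjoint_of_subset_left (Finset.subset_insert t T') hdisj⟩
      refine IH (insert t J) hdisj' ?_ ?_ H2 x ?_
      · intro x hx'
        exact H0 x fun l hl => hx' l (fun hlT' => hl (Finset.mem_insert_of_mem hlT'))
      · -- derive the rule for (T', insert t J)
        intro b hb hbne x' hx'
        set M : ℍ[ℝ] → ℍ[ℝ] := fun ζ => mlinEval c (Function.update b t ζ) with hMdef
        have hMadd : ∀ a b', M (a + b') = M a + M b' := fun a b' =>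
          mlinEval_update_add c b t a b'
        have hM0 : M (b t) ≠ 0 := by
          rw [hMdef]; simpa [Function.update_eq_self] using hbne
        have key : ∀ ζ, M ζ ≠ 0 → IsSc (mlinEval c (Function.update x' t ζ)) := by
          intro ζ hζ
          refine H1 (Function.update b t ζ) ?_ hζ (Function.update x' t ζ) ?_
          · intro l hl
            have hlt : l ≠ t := fun h => hl (h ▸ Finset.mem_insert_self t T')
            rw [Function.update_of_ne hlt]
            exact hb l fun hlT' => hl (Finset.mem_insert_of_mem hlT')
          · intro l hl
            by_cases hlt : l = t
            · subst hlt; simp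
            · rw [Function.update_of_ne hlt, Function.update_of_ne hlt]
              exact hx' l (by simp [hlt, hl])
        have hΦadd : ∀ a b', mlinEval c (Function.update x' t (a + b')) =
            mlinEval c (Function.update x' t a) + mlinEval c (Function.update x' t b') :=
          fun a b' => mlinEval_update_add c x' t a b'
        have e1 : ∀ ζ, (mlinEval c (Function.update x' t ζ)).imI = 0 := by
          refine L0 M _ hMadd (fun a b' => by rw [hΦadd]; simp) (b t) hM0 ?_
          exact fun ζ hζ => (key ζ hζ).1
        have e2 : ∀ ζ, (mlinEval c (Function.update x' t ζ)).imJ = 0 := by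
          refine L0 M _ hMadd (fun a b' => by rw [hΦadd]; simp) (b t) hM0 ?_
          exact fun ζ hζ => (key ζ hζ).2.1
        have e3 : ∀ ζ, (mlinEval c (Function.update x' t ζ)).imK = 0 := by
          refine L0 M _ hMadd (fun a b' => by rw [hΦadd]; simp) (b t) hM0 ?_
          exact fun ζ hζ => (key ζ hζ).2.2
        have hxx : Function.update x' t (x' t) = x' := Function.update_eq_self t x'
        exact ⟨by rw [← hxx]; exact e1 (x' t), by rw [← hxx]; exact e2 (x' t),
          by rw [← hxx]; exact e3 (x' t)⟩
      · intro l hl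
        apply hx
        simp only [Finset.mem_union, Finset.mem_insert] at hl ⊢
        tauto

end MLAux

open MLAux in
/-- If the image of a multilinear polynomial on ℍ contains a nonzero scalar
and a non-scalar quaternion, then the image is all of ℍ. -/
theorem image_multilinear_eq_univ {m : ℕ} (c : Equiv.Perm (Fin m) → ℝ)
    (hscalar : ∃ r : ℝ, r ≠ 0 ∧ (r : ℍ[ℝ]) ∈ Set.range (mlinEval c))
    (hnonscalar : ∃ q ∈ Set.range (mlinEval c), ∀ r : ℝ, q ≠ (r : ℍ[ℝ])) :
    Set.range (mlinEval c) = (Set.univ : Set ℍ[ℝ]) := by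
  classical
  obtain ⟨r, hr, y, hy⟩ := hscalar
  obtain ⟨q, ⟨xq, hxq⟩, hq⟩ := hnonscalar
  by_cases hwin : ∃ (x : Fin m → ℍ[ℝ]) (i : Fin m) (ξ₁ ξ₂ : ℍ[ℝ]),
      (mlinEval c (Function.update x i ξ₁) ≠ 0 ∧ IsSc (mlinEval c (Function.update x i ξ₁))) ∧
      ¬ IsSc (mlinEval c (Function.update x i ξ₂))
  · -- WIN case: a slot subspace contains a nonzero scalar and a nonscalar.
    obtain ⟨x, i, ξ₁, ξ₂, ⟨hs0, hssc⟩, hns⟩ := hwin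
    set s : ℍ[ℝ] := mlinEval c (Function.update x i ξ₁) with hsdef
    set w : ℍ[ℝ] := mlinEval c (Function.update x i ξ₂) with hwdef
    have hsr : s.re ≠ 0 := by
      intro h
      exact hs0 (by ext <;> simp [h, hssc.1, hssc.2.1, hssc.2.2])
    have comb : ∀ a b : ℝ,
        mlinEval c (Function.update x i (a • ξ₁ + b • ξ₂)) = a • s + b • w := by
      intro a b
      rw [mlinEval_update_add, mlinEval_update_smul, mlinEval_update_smul]
    -- imaginary norm of w is nonzero
    have hn2 : w.imI ^ 2 + w.imJ ^ 2 + w.imK ^ 2 ≠ 0 := by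
      intro h
      refine hns ⟨?_, ?_, ?_⟩ <;>
        [ (have h2 : w.imI ^ 2 = 0 := le_antisymm (by nlinarith [sq_nonneg w.imJ, sq_nonneg w.imK]) (sq_nonneg _));
          (have h2 : w.imJ ^ 2 = 0 := le_antisymm (by nlinarith [sq_nonneg w.imI, sq_nonneg w.imK]) (sq_nonneg _));
          (have h2 : w.imK ^ 2 = 0 := le_antisymm (by nlinarith [sq_nonneg w.imI, sq_nonneg w.imJ]) (sq_nonneg _))] <;>
        exact pow_eq_zero_iff (by norm_num) |>.mp h2
    apply Set.eq_univ_of_forall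
    intro z
    by_cases hz : z.imI ^ 2 + z.imJ ^ 2 + z.imK ^ 2 = 0
    · -- z is scalar
      have hz1 : z.imI = 0 := by
        have h2 : z.imI ^ 2 = 0 :=
          le_antisymm (by nlinarith [sq_nonneg z.imJ, sq_nonneg z.imK]) (sq_nonneg _)
        exact pow_eq_zero_iff (by norm_num) |>.mp h2
      have hz2 : z.imJ = 0 := by
        have h2 : z.imJ ^ 2 = 0 :=
          le_antisymm (by nlinarith [sq_nonneg z.imI, sq_nonneg z.imK]) (sq_nonneg _)
        exact pow_eq_zero_iff (by norm_num) |>.mp h2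
      have hz3 : z.imK = 0 := by
        have h2 : z.imK ^ 2 = 0 :=
          le_antisymm (by nlinarith [sq_nonneg z.imI, sq_nonneg z.imJ]) (sq_nonneg _)
        exact pow_eq_zero_iff (by norm_num) |>.mp h2
      refine ⟨Function.update x i ((z.re / s.re) • ξ₁ + (0 : ℝ) • ξ₂), ?_⟩
      rw [comb]
      ext <;> simp [hssc.1, hssc.2.1, hssc.2.2, hz1, hz2, hz3] <;> field_simp
    · -- z has nonzero imaginary part
      have hn2pos : 0 < w.imI ^ 2 + w.imJ ^ 2 + w.imK ^ 2 :=
        lt_of_le_of_ne (by positivity) (Ne.symm hn2)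
      have hzpos : 0 < z.imI ^ 2 + z.imJ ^ 2 + z.imK ^ 2 :=
        lt_of_le_of_ne (by positivity) (Ne.symm hz)
      -- choose b with correct norm and avoiding the antipode
      obtain ⟨b, hbnorm, hbne⟩ : ∃ b : ℝ,
          b ^ 2 * (w.imI ^ 2 + w.imJ ^ 2 + w.imK ^ 2) =
            z.imI ^ 2 + z.imJ ^ 2 + z.imK ^ 2 ∧
          ¬(z.imI = -(b * w.imI) ∧ z.imJ = -(b * w.imJ) ∧ z.imK = -(b * w.imK)) := by
        set nu2 := z.imI ^ 2 + z.imJ ^ 2 + z.imK ^ 2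
        set n2 := w.imI ^ 2 + w.imJ ^ 2 + w.imK ^ 2
        have hb1 : (Real.sqrt (nu2 / n2)) ^ 2 * n2 = nu2 := by
          rw [Real.sq_sqrt (by positivity)]
          field_simp
        set b1 := Real.sqrt (nu2 / n2) with hb1def
        have hb1ne : b1 ≠ 0 := by
          intro h
          rw [h] at hb1; simp at hb1
          exact hz hb1.symm
        by_cases hcase : z.imI = -(b1 * w.imI) ∧ z.imJ = -(b1 * w.imJ) ∧ z.imK = -(b1 * w.imK)
        · refine ⟨-b1, by rw [neg_pow]; simpa using hb1, ?_⟩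
          rintro ⟨h1, h2, h3⟩
          obtain ⟨g1, g2, g3⟩ := hcase
          ring_nf at h1 h2 h3 g1 g2 g3
          have key : ∀ wc : ℝ, b1 * wc = 0 → wc = 0 := fun wc h =>
            (mul_eq_zero.mp h).resolve_left hb1ne
          have w1 : w.imI = 0 := key _ (by linarith)
          have w2 : w.imJ = 0 := key _ (by linarith)
          have w3 : w.imK = 0 := key _ (by linarith)
          apply hn2; simp [n2, w1, w2, w3]
        · exact ⟨b1, hb1, hcase⟩
      set a : ℝ := (z.re - b * w.re) / s.re with hadef
      set Z : ℍ[ℝ] := a • s + b • w with hZdef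
      have hZmem : ∀ u : ℍ[ℝ], u ≠ 0 → u * Z * u⁻¹ ∈ Set.range (mlinEval c) := by
        intro u hu
        refine ⟨fun l => u * (Function.update x i (a • ξ₁ + b • ξ₂)) l * u⁻¹, ?_⟩
        rw [mlinEval_conj c _ u hu, comb]
      set P1 : ℍ[ℝ] := ⟨0, b * w.imI, b * w.imJ, b * w.imK⟩ with hP1def
      set P2 : ℍ[ℝ] := ⟨0, z.imI, z.imJ, z.imK⟩ with hP2def
      have hP1r : P1.re = 0 := rfl
      have hP1i : P1.imI = b * w.imI := rfl
      have hP1j : P1.imJ = b * w.imJ := rfl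
      have hP1k : P1.imK = b * w.imK := rfl
      have hP2r : P2.re = 0 := rfl
      have hP2i : P2.imI = z.imI := rfl
      have hP2j : P2.imJ = z.imJ := rfl
      have hP2k : P2.imK = z.imK := rfl
      have hZ : Z = (z.re : ℍ[ℝ]) + P1 := by
        ext <;>
          simp [hZdef, hP1r, hP1i, hP1j, hP1k, hssc.1, hssc.2.1, hssc.2.2] <;>
          rw [hadef, div_mul_cancel₀ _ hsr] <;> ring
      have hzeq : z = (z.re : ℍ[ℝ]) + P2 := by
        ext <;> simp [hP2r, hP2i, hP2j, hP2k]
      have hP : P1 * P1 = P2 * P2 := by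
        ext <;>
          simp [hP1r, hP1i, hP1j, hP1k, hP2r, hP2i, hP2j, hP2k, Quaternion.re_mul, Quaternion.imI_mul,
            Quaternion.imJ_mul, Quaternion.imK_mul] <;> ring_nf
        nlinarith [hbnorm]
      set u : ℍ[ℝ] := P1 + P2 with hudef
      have hu : u ≠ 0 := by
        intro h
        apply hbne
        have h1 := congrArg QuaternionAlgebra.imI h
        have h2 := congrArg QuaternionAlgebra.imJ h
        have h3 := congrArg QuaternionAlgebra.imK h
        simp [hudef, hP1i, hP1j, hP1k, hP2i, hP2j, hP2k] at h1 h2 h3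
        exact ⟨by linarith, by linarith, by linarith⟩
      have huZ : u * Z = z * u := by
        rw [hZ]
        nth_rewrite 2 [hzeq]
        calc (P1 + P2) * ((z.re : ℍ[ℝ]) + P1)
            = (P1 + P2) * (z.re : ℍ[ℝ]) + (P1 * P1 + P2 * P1) := by noncomm_ring
          _ = (z.re : ℍ[ℝ]) * (P1 + P2) + (P2 * P2 + P2 * P1) := by
              rw [hP, (Quaternion.coe_commutes z.re (P1 + P2)).symm]
          _ = ((z.re : ℍ[ℝ]) + P2) * (P1 + P2) := by noncomm_ring
      have : u * Z * u⁻¹ = z := by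
        rw [huZ, mul_assoc, mul_inv_cancel₀ hu, mul_one]
      rw [← this]
      exact hZmem u hu
  · -- NO-WIN case: all values are scalar, contradicting hnonscalar.
    exfalso
    push_neg at hwin
    have hrule : ∀ (x : Fin m → ℍ[ℝ]) (i : Fin m) (ξ : ℍ[ℝ]),
        mlinEval c x ≠ 0 → IsSc (mlinEval c x) → IsSc (mlinEval c (Function.update x i ξ)) := by
      intro x i ξ hne hsc
      exact hwin x i (x i) ξ
        ⟨by rwa [Function.update_eq_self], by rwa [Function.update_eq_self]⟩
    have hyne : mlinEval c y ≠ 0 := by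
      rw [hy]
      intro h
      exact hr (Quaternion.coe_injective (by simpa using h))
    have hysc : IsSc (mlinEval c y) := by rw [hy]; exact isSc_coe r
    have main : ∀ F : Finset (Fin m), ∀ x : Fin m → ℍ[ℝ],
        (∀ l ∉ F, x l = y l) → IsSc (mlinEval c x) := by
      intro F
      induction F using Finset.induction_on with
      | empty =>
          intro x hx
          have : x = y := funext fun l => hx l (Finset.notMem_empty l)
          rw [this]; exact hysc
      | @insert i F hiF IH =>
          intro x hx
          have hcup : insert i F = F ∪ {i} := by
            ext l; simp [or_comm]
          refine LEM c y F {i} (Finset.disjoint_singleton_right.mpr hiF) IH ?_ hyne x ?_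
          · intro x₀ hx₀ hx₀ne x' hx'
            have hx'eq : x' = Function.update x₀ i (x' i) := by
              funext l
              by_cases hl : l = i
              · subst hl; simp
              · rw [Function.update_of_ne hl]
                exact hx' l (by simp [hl])
            rw [hx'eq]
            exact hrule x₀ i (x' i) hx₀ne (IH x₀ hx₀)
          · intro l hl
            exact hx l (by rwa [hcup])
    have : IsSc q := by
      rw [← hxq]
      exact main Finset.univ xq (fun l hl => absurd (Finset.mem_univ l) hl)
    obtain ⟨r', hr'⟩ := (isSc_iff q).mp this
    exact hq r' hr'
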